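/- Under the fitted mixed-propensity model, for any two distinct groups r ≠ s in G, the expected number of sampled directed paths of length 2 from group r to group s equals the observed number: E[ Σ_{j∈N} Σ_{i : g i = r} Σ_{k : g k = s} Â i j · Â j k ] = Σ_{j∈N} d_{j,r}^i · d_{j,s}^o. -/

import Mathlib

open MeasureTheory ProbabilityTheory
open scoped ProbabilityTheory NNReal
open scoped ENNReal

lemma hasSum_poisson_mean (r : ℝ≥0) :
    HasSum (fun n : ℕ => (n : ℝ) * poissonPMFReal r n) r := by
  have h := (poissonPMFRealSum r).mul_left (r : ℝ)
  rw [mul_one] at h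
  have heq : (fun n => (r : ℝ) * poissonPMFReal r n)
      = fun n => (((n + 1 : ℕ) : ℝ) * poissonPMFReal r (n + 1)) := by
    funext n
    unfold poissonPMFReal
    rw [Nat.factorial_succ]
    push_cast
    have h1 : ((n : ℝ) + 1) ≠ 0 := by positivity
    have h2 : (n.factorial : ℝ) ≠ 0 := by positivity
    field_simp
    ring
  rw [show (fun i => (r : ℝ) * (Real.exp (-↑r) * ↑r ^ i / ↑i.factorial)) = fun n => (r : ℝ) * poissonPMFReal r n from rfl, heq] at h
  have h2 := (hasSum_nat_add_iff
    (f := fun n => (n : ℝ) * poissonPMFReal r n) 1).mp h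
  simpa [poissonPMFReal] using h2

lemma poisson_integrable (r : ℝ≥0) :
    Integrable (fun n : ℕ => (n : ℝ)) (poissonMeasure r) := by
  rw [integrable_poissonMeasure_iff]
  convert (hasSum_poisson_mean r).summable using 2 with n
  rw [Real.norm_natCast, mul_comm]
  rfl

lemma poisson_integral (r : ℝ≥0) :
    ∫ n, (n : ℝ) ∂(poissonMeasure r) = r := by
  rw [integral_poissonMeasure' (poisson_integrable r)]
  have : ∀ n : ℕ, (Real.exp (-r) * r ^ n / (n.factorial : ℝ)) • (n : ℝ)
      = (n : ℝ) * poissonPMFReal r n := by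
    intro n
    rw [smul_eq_mul, mul_comm]
    rfl
  rw [tsum_congr this, (hasSum_poisson_mean r).tsum_eq]


/-- Out-degree of node `i` to group `s`: `d_{i,s}^o = ∑_{j : g j = s} A i j`. -/
def dOut {N G : Type*} [Fintype N] [DecidableEq G] (g : N → G) (a : N → N → ℕ)
    (i : N) (s : G) : ℕ := ∑ j ∈ Finset.univ.filter (fun j => g j = s), a i j

/-- In-degree of node `i` from group `s`: `d_{i,s}^i = ∑_{j : g j = s} A j i`. -/
def dIn {N G : Type*} [Fintype N] [DecidableEq G] (g : N → G) (a : N → N → ℕ)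
    (i : N) (s : G) : ℕ := ∑ j ∈ Finset.univ.filter (fun j => g j = s), a j i

/-- Number of edges from group `r` to group `s`. -/
def mEdges {N G : Type*} [Fintype N] [DecidableEq G] (g : N → G) (a : N → N → ℕ)
    (r s : G) : ℕ :=
  ∑ i ∈ Finset.univ.filter (fun i => g i = r),
    ∑ j ∈ Finset.univ.filter (fun j => g j = s), a i j

lemma sum_dOut {N G : Type*} [Fintype N] [DecidableEq G] (g : N → G) (a : N → N → ℕ)
    (r s : G) : ∑ i ∈ Finset.univ.filter (fun i => g i = r), dOut g a i s = mEdges g a r s :=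
  rfl

lemma sum_dIn {N G : Type*} [Fintype N] [DecidableEq G] (g : N → G) (a : N → N → ℕ)
    (r s : G) : ∑ k ∈ Finset.univ.filter (fun k => g k = s), dIn g a k r = mEdges g a r s := by
  rw [mEdges, Finset.sum_comm]
  rfl

/-- under the fitted mixed-propensity model, for distinct groups
`r ≠ s`, the expected number of sampled directed paths of length 2 from group `r` to
group `s` equals the observed number `∑_j d_{j,r}^i d_{j,s}^o`. -/
theorem expected_paths_two_cross_group
    {Ω : Type*} [MeasureSpace Ω] [IsProbabilityMeasure (ℙ : Measure Ω)]
    {N G : Type*} [Fintype N] [Fintype G] [DecidableEq G]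
    (g : N → G) (a : N → N → ℕ)
    (hm : ∀ r s : G, 0 < mEdges g a r s)
    (Ahat : N → N → Ω → ℕ)
    (hindep : iIndepFun (fun p : N × N => Ahat p.1 p.2) ℙ)
    (hdist : ∀ i j : N, Measure.map (Ahat i j) ℙ
      = poissonMeasure (((dOut g a i (g j) * dIn g a j (g i) : ℕ) : ℝ≥0)
          / ((mEdges g a (g i) (g j) : ℕ) : ℝ≥0)))
    (r s : G) (hrs : r ≠ s) :
    (∫ x, (∑ j : N, ∑ i ∈ Finset.univ.filter (fun i => g i = r),
        ∑ k ∈ Finset.univ.filter (fun k => g k = s),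
          (Ahat i j x : ℝ) * (Ahat j k x : ℝ)) ∂ℙ)
      = ∑ j : N, (dIn g a j r : ℝ) * (dOut g a j s : ℝ) := by
  -- ae-measurability
  have hAE : ∀ i j : N, AEMeasurable (Ahat i j) ℙ := by
    intro i j
    by_contra h
    have h2 := hdist i j
    rw [Measure.map_of_not_aemeasurable h] at h2
    exact IsProbabilityMeasure.ne_zero _ h2.symm
  -- integrability of each coordinate
  have hInt : ∀ i j : N, Integrable (fun ω => (Ahat i j ω : ℝ)) ℙ := by
    intro i j
    have h1 : Integrable (fun n : ℕ => (n : ℝ)) (Measure.map (Ahat i j) ℙ) := by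
      rw [hdist i j]; exact poisson_integrable _
    have := (integrable_map_measure h1.aestronglyMeasurable (hAE i j)).mp h1
    exact this
  -- means
  have hMean : ∀ i j : N, ∫ ω, (Ahat i j ω : ℝ) ∂ℙ
      = ((dOut g a i (g j) : ℝ) * (dIn g a j (g i) : ℝ)) / (mEdges g a (g i) (g j) : ℝ) := by
    intro i j
    have h1 : ∫ ω, (Ahat i j ω : ℝ) ∂ℙ
        = ∫ n, (n : ℝ) ∂(Measure.map (Ahat i j) ℙ) := by
      rw [integral_map (hAE i j) measurable_from_nat.aestronglyMeasurable]
    rw [h1, hdist i j, poisson_integral]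
    push_cast
    ring_nf
  -- independence of the two factors and integrability of the product
  have hprod : ∀ (j i k : N), g i = r → g k = s →
      Integrable (fun x => (Ahat i j x : ℝ) * (Ahat j k x : ℝ)) ℙ ∧
      (∫ x, (Ahat i j x : ℝ) * (Ahat j k x : ℝ) ∂ℙ)
        = (∫ x, (Ahat i j x : ℝ) ∂ℙ) * ∫ x, (Ahat j k x : ℝ) ∂ℙ := by
    intro j i k hi hk
    have hne : (i, j) ≠ (j, k) := by
      intro h
      obtain ⟨h1, h2⟩ := Prod.mk.injEq .. ▸ h
      exact hrs (by rw [← hi, h1, h2, hk])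
    have hInd : IndepFun (fun ω => (Ahat i j ω : ℝ)) (fun ω => (Ahat j k ω : ℝ)) ℙ := by
      exact (hindep.indepFun hne).comp measurable_from_nat measurable_from_nat
    refine ⟨?_, hInd.integral_mul_eq_mul_integral (hInt i j).aestronglyMeasurable (hInt j k).aestronglyMeasurable⟩
    have := hInd.integrable_mul (hInt i j) (hInt j k)
    simpa [Pi.mul_def] using this
  -- push integral through the sums
  rw [integral_finset_sum _ (fun j _ => integrable_finset_sum _ (fun i hi =>
    integrable_finset_sum _ (fun k hk =>
      (hprod j i k (by simpa using hi) (by simpa using hk)).1)))]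
  refine Finset.sum_congr rfl (fun j _ => ?_)
  rw [integral_finset_sum _ (fun i hi => integrable_finset_sum _ (fun k hk =>
      (hprod j i k (by simpa using hi) (by simpa using hk)).1))]
  calc ∑ i ∈ Finset.univ.filter (fun i => g i = r),
        ∫ x, ∑ k ∈ Finset.univ.filter (fun k => g k = s),
          (Ahat i j x : ℝ) * (Ahat j k x : ℝ) ∂ℙ
      = ∑ i ∈ Finset.univ.filter (fun i => g i = r),
        ∑ k ∈ Finset.univ.filter (fun k => g k = s),
          ((dOut g a i (g j) : ℝ) * (dIn g a j r : ℝ) / (mEdges g a r (g j) : ℝ))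
            * ((dOut g a j s : ℝ) * (dIn g a k (g j) : ℝ) / (mEdges g a (g j) s : ℝ)) := by
        refine Finset.sum_congr rfl (fun i hi => ?_)
        have hir : g i = r := by simpa using hi
        rw [integral_finset_sum _ (fun k hk =>
          (hprod j i k hir (by simpa using hk)).1)]
        refine Finset.sum_congr rfl (fun k hk => ?_)
        have hks : g k = s := by simpa using hk
        rw [(hprod j i k hir hks).2, hMean i j, hMean j k, hir, hks]
    _ = (dIn g a j r : ℝ) * (dOut g a j s : ℝ) := by
        rw [← Finset.sum_mul_sum]
        have hm1 : (0 : ℝ) < (mEdges g a r (g j) : ℝ) := by exact_mod_cast hm r (g j)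
        have hm2 : (0 : ℝ) < (mEdges g a (g j) s : ℝ) := by exact_mod_cast hm (g j) s
        have e1 : ∑ i ∈ Finset.univ.filter (fun i => g i = r),
            (dOut g a i (g j) : ℝ) * (dIn g a j r : ℝ) / (mEdges g a r (g j) : ℝ)
            = (dIn g a j r : ℝ) := by
          rw [← Finset.sum_div, ← Finset.sum_mul]
          rw [show ∑ i ∈ Finset.univ.filter (fun i => g i = r), (dOut g a i (g j) : ℝ)
            = (mEdges g a r (g j) : ℝ) by exact_mod_cast congrArg Nat.cast (sum_dOut g a r (g j))]
          field_simp
        have e2 : ∑ k ∈ Finset.univ.filter (fun k => g k = s),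
            (dOut g a j s : ℝ) * (dIn g a k (g j) : ℝ) / (mEdges g a (g j) s : ℝ)
            = (dOut g a j s : ℝ) := by
          rw [← Finset.sum_div, ← Finset.mul_sum]
          rw [show ∑ k ∈ Finset.univ.filter (fun k => g k = s), (dIn g a k (g j) : ℝ)
            = (mEdges g a (g j) s : ℝ) by exact_mod_cast congrArg Nat.cast (sum_dIn g a (g j) s)]
          field_simp
        rw [e1, e2]
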